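/- Let p ≥ 2 and define the sequence (u_n) by u_0 = 1, u_1 = 2p - 5, and u_{k+2} = (2p-5)·u_{k+1} - (k+1)(2p-(k+1))·u_k. Then Σ_{n≥0} (u_n/n!)·x^n = (1+x)^{2p-3}·(1-x)², and for 2 ≤ n ≤ 2p-3, u_n = 4·((2p-3)!/(2p-1-n)!)·(n - p_+)(n - p_-), where p_± = (2p-1 ± √(2p-1))/2. -/

import Mathlib

open Finset

noncomputable def Bz (m : ℕ) (k : ℤ) : ℝ :=
  if 0 ≤ k then (m.choose k.toNat : ℝ) else 0

noncomputable def Cz (m : ℕ) (k : ℤ) : ℝ :=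
  Bz m k - 2 * Bz m (k - 1) + Bz m (k - 2)

lemma Bz_natCast (m n : ℕ) : Bz m (n : ℤ) = (m.choose n : ℝ) := by
  simp [Bz]

lemma Bz_neg (m : ℕ) (k : ℤ) (h : k < 0) : Bz m k = 0 := by
  simp [Bz, not_le.mpr h]

lemma Bz_zero_of_lt (m : ℕ) (k : ℤ) (h : (m : ℤ) < k) : Bz m k = 0 := by
  have h0 : (0:ℤ) ≤ k := le_trans (Int.natCast_nonneg m) h.le
  have h1 : m < k.toNat := by omega
  simp [Bz, h0, Nat.choose_eq_zero_of_lt h1]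

lemma Bz_key (m : ℕ) (k : ℤ) :
    ((k : ℝ) + 1) * Bz m (k + 1) = ((m : ℝ) - k) * Bz m k := by
  rcases lt_trichotomy k (-1) with h | h | h
  · rw [Bz_neg m k (by omega), Bz_neg m (k+1) (by omega)]; ring
  · subst h
    rw [Bz_neg m (-1) (by omega)]
    push_cast; ring
  · obtain ⟨n, rfl⟩ : ∃ n : ℕ, k = (n : ℤ) := ⟨k.toNat, by omega⟩
    rw [show (n:ℤ) + 1 = ((n+1 : ℕ) : ℤ) by push_cast; ring, Bz_natCast, Bz_natCast]
    rcases le_or_gt n m with hnm | hnm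
    · have hc := Nat.choose_succ_right_eq m n
      have hc' : ((m.choose (n+1) * (n+1) : ℕ) : ℝ) = ((m.choose n * (m - n) : ℕ) : ℝ) := by
        exact_mod_cast hc
      push_cast [Nat.cast_sub hnm] at hc'
      push_cast
      linear_combination hc'
    · rw [Nat.choose_eq_zero_of_lt hnm, Nat.choose_eq_zero_of_lt (by omega)]
      push_cast; ring

lemma Cz_rec (m : ℕ) (k : ℤ) :
    ((k : ℝ) + 2) * Cz m (k + 2) =
      ((m : ℝ) - 2) * Cz m (k + 1) - ((m : ℝ) + 2 - k) * Cz m k := by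
  have h1 := Bz_key m (k + 1)
  have h2 := Bz_key m k
  have h3 := Bz_key m (k - 1)
  have h4 := Bz_key m (k - 2)
  simp only [Cz]
  have e1 : k + 2 - 1 = k + 1 := by ring
  have e2 : k + 2 - 2 = k := by ring
  have e3 : k + 1 - 1 = k := by ring
  have e4 : k + 1 - 2 = k - 1 := by ring
  have e5 : k - 1 + 1 = k := by ring
  have e6 : k - 2 + 1 = k - 1 := by ring
  rw [e1, e2, e3, e4]
  rw [show k + 1 + 1 = k + 2 by ring] at h1
  rw [e5] at h3
  rw [e6] at h4
  push_cast at h1 h2 h3 h4 ⊢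
  linear_combination h1 - 3 * h2 + 3 * h3 - h4

lemma sum_Bz (m N : ℕ) (hN : m + 1 ≤ N) (x : ℝ) :
    ∑ n ∈ range N, Bz m (n : ℤ) * x ^ n = (1 + x) ^ m := by
  rw [← Finset.sum_subset (Finset.range_subset_range.2 hN)
      (fun n _ hn => by
        rw [Bz_zero_of_lt m n (by simp only [mem_range, not_lt] at hn; exact_mod_cast by omega), zero_mul])]
  have hpow : (1+x)^m = ∑ k ∈ range (m+1), x^k * (m.choose k : ℝ) := by
    rw [add_comm 1 x, add_pow]; simp
  rw [hpow]
  refine Finset.sum_congr rfl fun n hn => ?_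
  rw [Bz_natCast]; ring

lemma sum_Cz (m : ℕ) (x : ℝ) :
    ∑ n ∈ range (m + 3), Cz m (n : ℤ) * x ^ n = (1 + x) ^ m * (1 - x) ^ 2 := by
  have hA : ∑ n ∈ range (m+3), Bz m (n : ℤ) * x ^ n = (1+x)^m := sum_Bz m (m+3) (by omega) x
  have hB : ∑ n ∈ range (m+3), Bz m ((n:ℤ) - 1) * x ^ n = x * (1+x)^m := by
    rw [show m + 3 = (m+2)+1 from rfl, Finset.sum_range_succ']
    have e0 : Bz m ((0:ℕ) - 1 : ℤ) * x ^ (0:ℕ) = 0 := by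
      rw [Bz_neg m _ (by norm_num)]; ring
    rw [e0, add_zero]
    calc ∑ i ∈ range (m+2), Bz m ((i+1 : ℕ) - 1 : ℤ) * x ^ (i+1)
        = ∑ i ∈ range (m+2), (Bz m (i : ℤ) * x ^ i) * x := by
          refine Finset.sum_congr rfl fun i _ => ?_
          rw [show ((i+1 : ℕ) : ℤ) - 1 = (i : ℤ) by push_cast; ring, pow_succ]; ring
      _ = (∑ i ∈ range (m+2), Bz m (i : ℤ) * x ^ i) * x := by rw [Finset.sum_mul]
      _ = x * (1+x)^m := by rw [sum_Bz m (m+2) (by omega)]; ring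
  have hC : ∑ n ∈ range (m+3), Bz m ((n:ℤ) - 2) * x ^ n = x^2 * (1+x)^m := by
    rw [show m + 3 = (m+2)+1 from rfl, Finset.sum_range_succ']
    have e0 : Bz m ((0:ℕ) - 2 : ℤ) * x ^ (0:ℕ) = 0 := by
      rw [Bz_neg m _ (by norm_num)]; ring
    rw [e0, add_zero]
    rw [show m + 2 = (m+1)+1 from rfl, Finset.sum_range_succ']
    have e1 : Bz m ((0+1 : ℕ) - 2 : ℤ) * x ^ (0+1) = 0 := by
      rw [Bz_neg m _ (by norm_num)]; ring
    rw [e1, add_zero]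
    calc ∑ i ∈ range (m+1), Bz m ((i+1+1 : ℕ) - 2 : ℤ) * x ^ (i+1+1)
        = ∑ i ∈ range (m+1), (Bz m (i : ℤ) * x ^ i) * x^2 := by
          refine Finset.sum_congr rfl fun i _ => ?_
          rw [show ((i+1+1 : ℕ) : ℤ) - 2 = (i : ℤ) by push_cast; ring]
          ring
      _ = (∑ i ∈ range (m+1), Bz m (i : ℤ) * x ^ i) * x^2 := by rw [Finset.sum_mul]
      _ = x^2 * (1+x)^m := by rw [sum_Bz m (m+1) le_rfl]; ring
  calc ∑ n ∈ range (m+3), Cz m (n : ℤ) * x ^ n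
      = ∑ n ∈ range (m+3), (Bz m (n:ℤ) * x ^ n - 2 * (Bz m ((n:ℤ)-1) * x ^ n)
          + Bz m ((n:ℤ)-2) * x ^ n) := by
        refine Finset.sum_congr rfl fun n _ => ?_
        rw [Cz]; ring
    _ = (1+x)^m - 2 * (x * (1+x)^m) + x^2 * (1+x)^m := by
        rw [Finset.sum_add_distrib, Finset.sum_sub_distrib, hA, ← Finset.mul_sum, hB, hC]
    _ = (1 + x) ^ m * (1 - x) ^ 2 := by ring

lemma key2 (a b : ℕ) :
    ((a+2).factorial : ℝ) * Cz (a+b+2) ((a+2 : ℕ) : ℤ) =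
      ((a+b+2).factorial : ℝ) / ((b+2).factorial : ℝ) *
        (((a:ℝ) - (b:ℝ))^2 - ((a:ℝ)+(b:ℝ)+4)) := by
  have h0 : Cz (a+b+2) ((a+2:ℕ):ℤ) = ((a+b+2).choose (a+2) : ℝ)
      - 2 * ((a+b+2).choose (a+1) : ℝ) + ((a+b+2).choose a : ℝ) := by
    rw [Cz, show ((a+2:ℕ):ℤ) - 1 = ((a+1:ℕ):ℤ) by push_cast; ring,
      show ((a+2:ℕ):ℤ) - 2 = ((a:ℕ):ℤ) by push_cast; ring,
      Bz_natCast, Bz_natCast, Bz_natCast]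
  rw [h0, Nat.cast_choose ℝ (show a+2 ≤ a+b+2 by omega),
      Nat.cast_choose ℝ (show a+1 ≤ a+b+2 by omega),
      Nat.cast_choose ℝ (show a ≤ a+b+2 by omega),
      show a+b+2 - (a+2) = b by omega, show a+b+2 - (a+1) = b+1 by omega,
      show a+b+2 - a = b+2 by omega]
  have fa1 : ((a+1).factorial : ℝ) = ((a:ℝ)+1) * a.factorial := by
    rw [Nat.factorial_succ]; push_cast; ring
  have fa2 : ((a+2).factorial : ℝ) = ((a:ℝ)+2) * ((a+1).factorial : ℝ) := by
    rw [show a+2 = (a+1)+1 from rfl, Nat.factorial_succ]; push_cast; ring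
  have fb1 : ((b+1).factorial : ℝ) = ((b:ℝ)+1) * b.factorial := by
    rw [Nat.factorial_succ]; push_cast; ring
  have fb2 : ((b+2).factorial : ℝ) = ((b:ℝ)+2) * ((b+1).factorial : ℝ) := by
    rw [show b+2 = (b+1)+1 from rfl, Nat.factorial_succ]; push_cast; ring
  rw [fa2, fa1, fb2, fb1]
  have ha : (a.factorial : ℝ) ≠ 0 := Nat.cast_ne_zero.mpr a.factorial_ne_zero
  have hb : (b.factorial : ℝ) ≠ 0 := Nat.cast_ne_zero.mpr b.factorial_ne_zero
  have h1 : ((a:ℝ)+1) ≠ 0 := by positivity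
  have h2 : ((a:ℝ)+2) ≠ 0 := by positivity
  have h3 : ((b:ℝ)+1) ≠ 0 := by positivity
  have h4 : ((b:ℝ)+2) ≠ 0 := by positivity
  field_simp
  ring

/-- For `p ≥ 2` and the sequence `u 0 = 1`, `u 1 = 2p - 5`,
`u (k+2) = (2p-5) u (k+1) - (k+1)(2p-(k+1)) u k`, the exponential generating
function equals `(1+x)^(2p-3) (1-x)^2`, and for `2 ≤ n ≤ 2p-3`,
`u n = 4 ((2p-3)!/(2p-1-n)!) (n - p₊)(n - p₋)` with
`p₊ = (2p-1+√(2p-1))/2`, `p₋ = (2p-1-√(2p-1))/2`. -/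
theorem stmt7 (p : ℕ) (hp : 2 ≤ p) (u : ℕ → ℝ)
    (h0 : u 0 = 1) (h1 : u 1 = 2 * (p : ℝ) - 5)
    (hrec : ∀ k : ℕ, u (k + 2) =
      (2 * (p : ℝ) - 5) * u (k + 1) - ((k : ℝ) + 1) * (2 * (p : ℝ) - ((k : ℝ) + 1)) * u k) :
    (∀ x : ℝ, HasSum (fun n : ℕ => u n / (n.factorial : ℝ) * x ^ n)
      ((1 + x) ^ (2 * p - 3) * (1 - x) ^ 2)) ∧
    (∀ n : ℕ, 2 ≤ n → n ≤ 2 * p - 3 →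
      u n = 4 * (((2 * p - 3).factorial : ℝ) / ((2 * p - 1 - n).factorial : ℝ)) *
        ((n : ℝ) - (2 * (p : ℝ) - 1 + Real.sqrt (2 * (p : ℝ) - 1)) / 2) *
        ((n : ℝ) - (2 * (p : ℝ) - 1 - Real.sqrt (2 * (p : ℝ) - 1)) / 2)) := by
  obtain ⟨m, hm⟩ : ∃ m, 2 * p = m + 3 := ⟨2 * p - 3, by omega⟩
  have hm3 : 2 * p - 3 = m := by omega
  have hpR : 2 * (p : ℝ) = (m : ℝ) + 3 := by
    have : ((2 * p : ℕ) : ℝ) = ((m + 3 : ℕ) : ℝ) := by rw [hm]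
    push_cast at this; linarith
  -- u n = n! * Cz m n
  have hu : ∀ n : ℕ, u n = (n.factorial : ℝ) * Cz m (n : ℤ) := by
    have key : ∀ n : ℕ, u n = (n.factorial : ℝ) * Cz m (n : ℤ) ∧
        u (n+1) = ((n+1).factorial : ℝ) * Cz m ((n+1 : ℕ) : ℤ) := by
      intro n
      induction n with
      | zero =>
        constructor
        · have hc : Cz m ((0:ℕ) : ℤ) = 1 := by norm_num [Cz, Bz]
          rw [hc, h0]; simp
        · have hc : Cz m ((1:ℕ) : ℤ) = (m : ℝ) - 2 := by
            norm_num [Cz, Bz]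
          rw [hc, h1, Nat.factorial_one]; push_cast; linarith
      | succ n ih =>
        refine ⟨ih.2, ?_⟩
        rw [hrec n, ih.1, ih.2, hpR]
        have hf1 : ((n+1+1).factorial : ℝ) = ((n:ℝ)+2) * (((n:ℝ)+1) * (n.factorial : ℝ)) := by
          rw [Nat.factorial_succ, Nat.factorial_succ]; push_cast; ring
        have hf2 : ((n+1).factorial : ℝ) = ((n:ℝ)+1) * (n.factorial : ℝ) := by
          rw [Nat.factorial_succ]; push_cast; ring
        rw [hf1, hf2,
          show ((n+1+1 : ℕ) : ℤ) = (n : ℤ) + 2 by push_cast; ring,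
          show ((n+1 : ℕ) : ℤ) = (n : ℤ) + 1 by push_cast; ring]
        have hr := Cz_rec m (n : ℤ)
        push_cast at hr ⊢
        linear_combination (-((n:ℝ)+1) * (n.factorial : ℝ)) * hr
    exact fun n => (key n).1
  constructor
  · intro x
    have hsupp : ∀ n : ℕ, n ∉ range (m+3) → u n / (n.factorial : ℝ) * x ^ n = 0 := by
      intro n hn
      simp only [mem_range, not_lt] at hn
      have hc : Cz m (n : ℤ) = 0 := by
        rw [Cz, Bz_zero_of_lt m _ (by omega), Bz_zero_of_lt m _ (by omega),
          Bz_zero_of_lt m _ (by omega)]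
        ring
      rw [hu n, hc]
      simp
    have hsum := hasSum_sum_of_ne_finset_zero (L := SummationFilter.unconditional ℕ) hsupp
    have heq : ∑ n ∈ range (m+3), u n / (n.factorial : ℝ) * x ^ n = (1+x)^m * (1-x)^2 := by
      rw [← sum_Cz m x]
      refine Finset.sum_congr rfl fun n _ => ?_
      rw [hu n]
      have hne : (n.factorial : ℝ) ≠ 0 := Nat.cast_ne_zero.mpr n.factorial_ne_zero
      field_simp
    rw [hm3]
    rw [heq] at hsum
    exact hsum
  · intro n hn2 hnm
    rw [hm3] at hnm
    obtain ⟨a, rfl⟩ : ∃ a, n = a + 2 := ⟨n - 2, by omega⟩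
    obtain ⟨b, rfl⟩ : ∃ b, m = a + b + 2 := ⟨m - (a + 2), by omega⟩
    rw [hu, hm3, show 2 * p - 1 - (a+2) = b + 2 by omega]
    have hp2 : 2 * (p:ℝ) - 1 = (a:ℝ) + (b:ℝ) + 4 := by push_cast at hpR; linarith
    have hs : Real.sqrt (2 * (p:ℝ) - 1) ^ 2 = 2 * (p:ℝ) - 1 :=
      Real.sq_sqrt (by rw [hp2]; positivity)
    rw [hp2] at hs ⊢
    have hk := key2 a b
    push_cast at hk hs ⊢
    linear_combination hk + (((a+b+2).factorial : ℝ) / ((b+2).factorial : ℝ)) * hs
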